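/- For every integer n ≥ 2, q_{SO}(n) = 1 + q(n). -/

import Mathlib

open MvPolynomial Matrix

noncomputable section

/-- The unit sphere `S^n ⊂ ℝ^{n+1}`, as the set of points with sum of squared coordinates 1. -/
def sphereSet (n : ℕ) : Set (Fin (n + 1) → ℝ) := {x | ∑ i, x i ^ 2 = 1}

/-- Each component of `F` is (the evaluation of) a real polynomial. -/
def IsPolyFun {n m : ℕ} (F : (Fin n → ℝ) → (Fin m → ℝ)) : Prop :=
  ∀ j, ∃ p : MvPolynomial (Fin n) ℝ, ∀ x, F x j = eval x p

/-- A polynomial map `S^n → S^r`: a polynomial map `ℝ^{n+1} → ℝ^{r+1}` sending the sphere to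
the sphere. -/
def IsSpherePolyMap (n r : ℕ) (F : (Fin (n + 1) → ℝ) → (Fin (r + 1) → ℝ)) : Prop :=
  IsPolyFun F ∧ ∀ x ∈ sphereSet n, F x ∈ sphereSet r

/-- `F` is non-constant on the set `s`. -/
def NonconstOn {α β : Type*} (s : Set α) (F : α → β) : Prop :=
  ∃ x ∈ s, ∃ y ∈ s, F x ≠ F y

/-- There exists a polynomial map `S^n → S^r` which is non-constant on `S^n`. -/
def ExistsNonconstPolyMap (n r : ℕ) : Prop :=
  ∃ F : (Fin (n + 1) → ℝ) → (Fin (r + 1) → ℝ),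
    IsSpherePolyMap n r F ∧ NonconstOn (sphereSet n) F

/-- `q n` is the least `r ≥ 1` for which there exists a non-constant polynomial map
`S^n → S^r`. -/
def q (n : ℕ) : ℕ := sInf {r | 1 ≤ r ∧ ExistsNonconstPolyMap n r}
/-- There exists a non-constant polynomial map `S^n → SO(r)`: a matrix-valued map with
polynomial entries, taking special orthogonal values on the sphere, non-constant there. -/
def ExistsNonconstPolyMapSO (n r : ℕ) : Prop :=
  ∃ P : (Fin (n + 1) → ℝ) → Matrix (Fin r) (Fin r) ℝ,
    (∀ i j : Fin r, ∃ p : MvPolynomial (Fin (n + 1)) ℝ, ∀ v, P v i j = eval v p) ∧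
    (∀ v ∈ sphereSet n, (P v)ᵀ * P v = 1 ∧ (P v).det = 1) ∧
    NonconstOn (sphereSet n) P

/-- `q_SO(n)`: the least `r ≥ 1` admitting a non-constant polynomial map `S^n → SO(r)`. -/
def qSO (n : ℕ) : ℕ := sInf {r | 1 ≤ r ∧ ExistsNonconstPolyMapSO n r}

/-- reflection matrix -/
def reflM {m : ℕ} (u : Fin m → ℝ) : Matrix (Fin m) (Fin m) ℝ :=
  1 + replicateCol Unit ((-2 : ℝ) • u) * replicateRow Unit u

lemma reflM_apply {m : ℕ} (u : Fin m → ℝ) (i j : Fin m) :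
    reflM u i j = (if i = j then 1 else 0) - 2 * (u i * u j) := by
  simp [reflM, Matrix.add_apply, Matrix.mul_apply, Matrix.one_apply]
  ring

lemma reflM_transpose {m : ℕ} (u : Fin m → ℝ) : (reflM u)ᵀ = reflM u := by
  ext i j
  simp only [Matrix.transpose_apply, reflM_apply, eq_comm]
  ring

lemma reflM_mul_self {m : ℕ} (u : Fin m → ℝ) (hu : ∑ i, u i ^ 2 = 1) :
    reflM u * reflM u = 1 := by
  ext i j
  simp only [Matrix.mul_apply, reflM_apply, Matrix.one_apply]
  have : ∀ k, ((if i = k then 1 else 0) - 2 * (u i * u k)) *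
      ((if k = j then 1 else 0) - 2 * (u k * u j))
      = (if i = k then (1:ℝ) else 0) * (if k = j then 1 else 0)
        - (if i = k then 1 else 0) * (2 * (u k * u j))
        - 2 * (u i * u k) * (if k = j then 1 else 0)
        + 4 * (u i * u j) * u k ^ 2 := by
    intro k; ring
  rw [Finset.sum_congr rfl fun k _ => this k]
  simp only [Finset.sum_add_distrib, Finset.sum_sub_distrib, ← Finset.mul_sum, hu]
  simp [Finset.sum_ite_eq, Finset.sum_ite_eq']
  split <;> ring

lemma reflM_det {m : ℕ} (u : Fin m → ℝ) (hu : ∑ i, u i ^ 2 = 1) :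
    (reflM u).det = -1 := by
  rw [reflM, det_one_add_replicateCol_mul_replicateRow]
  have : u ⬝ᵥ ((-2 : ℝ) • u) = -2 * ∑ i, u i ^ 2 := by
    simp [dotProduct, Finset.mul_sum]
    congr 1; ext i; ring
  rw [this, hu]; ring


lemma sphereSet_isConnected (n : ℕ) (hn : 1 ≤ n) : IsConnected (sphereSet n) := by
  have h1 : (1:Cardinal) < Module.rank ℝ (EuclideanSpace ℝ (Fin (n+1))) := by
    rw [← Module.finrank_eq_rank, finrank_euclideanSpace_fin]
    exact_mod_cast Nat.lt_of_lt_of_le one_lt_two (by omega)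
  have hc : IsConnected (Metric.sphere (0 : EuclideanSpace ℝ (Fin (n+1))) 1) :=
    isConnected_sphere h1 0 zero_le_one
  have himg : sphereSet n =
      (EuclideanSpace.equiv (Fin (n+1)) ℝ) '' (Metric.sphere 0 1) := by
    ext x
    constructor
    · intro hx
      refine ⟨(EuclideanSpace.equiv (Fin (n+1)) ℝ).symm x, ?_, rfl⟩
      simp only [Metric.mem_sphere, dist_zero_right, EuclideanSpace.norm_eq]
      have : ∀ i, ((EuclideanSpace.equiv (Fin (n+1)) ℝ).symm x) i = x i := fun i => rfl
      simp only [this]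
      have : ∑ i, ‖x i‖ ^ 2 = ∑ i, x i ^ 2 :=
        Finset.sum_congr rfl fun i _ => sq_abs (x i)
      rw [this, hx]; exact Real.sqrt_one
    · rintro ⟨y, hy, rfl⟩
      simp only [Metric.mem_sphere, dist_zero_right, EuclideanSpace.norm_eq] at hy
      have : ∑ i, (y i) ^ 2 = 1 := by
        have h0 : (0:ℝ) ≤ ∑ i, ‖y i‖ ^ 2 :=
          Finset.sum_nonneg fun i _ => sq_nonneg _
        have := Real.sqrt_eq_one.mp hy
        simpa [sq_abs] using this
      exact this
  rw [himg]
  exact hc.image _ (EuclideanSpace.equiv (Fin (n+1)) ℝ).continuous.continuousOn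

lemma single_mem_sphereSet (n : ℕ) : (Pi.single 0 1 : Fin (n+1) → ℝ) ∈ sphereSet n := by
  simp only [sphereSet, Set.mem_setOf_eq]
  rw [Finset.sum_eq_single 0]
  · simp
  · intro b _ hb; simp [Pi.single_apply, hb]
  · simp

lemma neg_single_mem_sphereSet (n : ℕ) :
    (-Pi.single 0 1 : Fin (n+1) → ℝ) ∈ sphereSet n := by
  have := single_mem_sphereSet n
  simpa [sphereSet, neg_pow] using this

lemma q_set_nonempty (n : ℕ) (hn : 1 ≤ n) :
    ∃ r, 1 ≤ r ∧ ExistsNonconstPolyMap n r := by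
  refine ⟨n, hn, id, ⟨fun j => ⟨X j, fun x => (eval_X j).symm⟩, fun x hx => hx⟩,
    Pi.single 0 1, single_mem_sphereSet n, -Pi.single 0 1, neg_single_mem_sphereSet n, ?_⟩
  intro h
  have := congrFun h 0
  simp at this
  linarith

lemma not_so_zero (n : ℕ) : ¬ ExistsNonconstPolyMapSO n 0 := by
  rintro ⟨P, -, -, x, -, y, -, hxy⟩
  exact hxy (Subsingleton.elim _ _)

lemma not_so_one (n : ℕ) : ¬ ExistsNonconstPolyMapSO n 1 := by
  rintro ⟨P, -, hP, x, hx, y, hy, hxy⟩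
  have key : ∀ v ∈ sphereSet n, P v = 1 := by
    intro v hv
    have hdet := (hP v hv).2
    rw [Matrix.det_fin_one] at hdet
    ext i j
    have hi : i = 0 := Subsingleton.elim _ _
    have hj : j = 0 := Subsingleton.elim _ _
    subst hi; subst hj
    simpa using hdet
  exact hxy ((key x hx).trans (key y hy).symm)

lemma so_to_sphere (n s : ℕ) (h : ExistsNonconstPolyMapSO n (s + 2)) :
    ExistsNonconstPolyMap n (s + 1) := by
  obtain ⟨P, hpoly, hso, x, hx, y, hy, hxy⟩ := h
  -- find a column where P x and P y differ
  have : ∃ j : Fin (s + 2), (fun i => P x i j) ≠ (fun i => P y i j) := by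
    by_contra hc
    push_neg at hc
    exact hxy (by ext i j; exact congrFun (hc j) i)
  obtain ⟨j₀, hj₀⟩ := this
  refine ⟨fun v i => P v i j₀, ⟨fun i => hpoly i j₀, ?_⟩, x, hx, y, hy, hj₀⟩
  intro v hv
  have h1 := (hso v hv).1
  have h2 := congrFun (congrFun h1 j₀) j₀
  simp only [Matrix.mul_apply, Matrix.transpose_apply, Matrix.one_apply_eq] at h2
  simpa only [sphereSet, Set.mem_setOf_eq, sq] using h2

lemma sphere_to_so (n r : ℕ) (hn : 1 ≤ n) (h : ExistsNonconstPolyMap n r) :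
    ExistsNonconstPolyMapSO n (r + 1) := by
  obtain ⟨F, ⟨hFpoly, hFsph⟩, hnc⟩ := h
  choose p hp using hFpoly
  set e : Fin (r + 1) → ℝ := Pi.single 0 1 with he_def
  have he : ∑ i, e i ^ 2 = 1 := single_mem_sphereSet r
  set P : (Fin (n + 1) → ℝ) → Matrix (Fin (r + 1)) (Fin (r + 1)) ℝ :=
    fun v => reflM e * reflM (F v) with hP_def
  have hFv : ∀ v ∈ sphereSet n, ∑ i, F v i ^ 2 = 1 := fun v hv => hFsph v hv
  refine ⟨P, ?_, ?_, ?_⟩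
  · -- polynomial entries
    intro i j
    refine ⟨∑ k : Fin (r + 1), C (reflM e i k) *
      ((if k = j then 1 else 0) - 2 * (p k * p j)), fun v => ?_⟩
    rw [hP_def]
    simp only [Matrix.mul_apply]
    rw [map_sum]
    refine Finset.sum_congr rfl fun k _ => ?_
    rw [reflM_apply, _root_.map_mul, eval_C]
    congr 1
    rw [reflM_apply]
    rw [map_sub, _root_.map_mul, _root_.map_mul, ← hp k v, ← hp j v]
    congr 1
    · split <;> simp
    · simp
  · -- orthogonality and determinant
    intro v hv
    have hu := hFv v hv
    constructor
    · rw [hP_def]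
      simp only
      rw [Matrix.transpose_mul, reflM_transpose, reflM_transpose]
      calc reflM (F v) * reflM e * (reflM e * reflM (F v))
          = reflM (F v) * (reflM e * reflM e) * reflM (F v) := by
            rw [Matrix.mul_assoc, Matrix.mul_assoc, Matrix.mul_assoc]
        _ = 1 := by rw [reflM_mul_self e he, Matrix.mul_one, reflM_mul_self _ hu]
    · rw [hP_def]
      simp only
      rw [Matrix.det_mul, reflM_det e he, reflM_det _ hu]
      norm_num
  · -- non-constancy
    by_contra hPc
    rw [NonconstOn] at hPc
    push_neg at hPc
    obtain ⟨x₀, hx₀, y₀, hy₀, hF⟩ := hnc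
    set w : Fin (r + 1) → ℝ := fun i => F y₀ i with hw_def
    have hw : ∑ i, w i ^ 2 = 1 := hFv y₀ hy₀
    -- all reflections agree
    have hrefl : ∀ z ∈ sphereSet n, reflM (F z) = reflM w := by
      intro z hz
      have hPz : P z = P y₀ := hPc z hz y₀ hy₀
      have : reflM e * reflM (F z) = reflM e * reflM w := hPz
      calc reflM (F z) = (reflM e * reflM e) * reflM (F z) := by
            rw [reflM_mul_self e he, Matrix.one_mul]
        _ = reflM e * (reflM e * reflM w) := by rw [Matrix.mul_assoc, this]
        _ = (reflM e * reflM e) * reflM w := by rw [Matrix.mul_assoc]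
        _ = reflM w := by rw [reflM_mul_self e he, Matrix.one_mul]
    have hprod : ∀ z ∈ sphereSet n, ∀ i j, F z i * F z j = w i * w j := by
      intro z hz i j
      have := congrFun (congrFun (hrefl z hz) i) j
      rw [reflM_apply, reflM_apply] at this
      linarith
    -- the function g
    set g : (Fin (n + 1) → ℝ) → ℝ := fun z => ∑ i, F z i * w i with hg_def
    have gsq : ∀ z ∈ sphereSet n, g z ^ 2 = 1 := by
      intro z hz
      have : g z ^ 2 = ∑ i, ∑ j, (F z i * w i) * (F z j * w j) := by
        rw [sq, hg_def]; exact Finset.sum_mul_sum _ _ _ _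
      rw [this]
      have : ∀ i ∈ Finset.univ, ∑ j ∈ Finset.univ, (F z i * w i) * (F z j * w j)
          = ∑ j, (w i ^ 2) * (w j ^ 2) := by
        intro i _
        refine Finset.sum_congr rfl fun j _ => ?_
        linear_combination (w i * w j) * hprod z hz i j
      rw [Finset.sum_congr rfl this]
      rw [← Finset.sum_mul_sum]
      rw [hw]; norm_num
    have hgy : g y₀ = 1 := by
      rw [hg_def]
      simp only
      rw [← hw]
      exact Finset.sum_congr rfl fun i _ => by rw [hw_def, sq]
    have hgx : g x₀ = -1 := by
      have h2 := gsq x₀ hx₀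
      have hne : g x₀ ≠ 1 := by
        intro h1
        apply hF
        funext i
        have : F x₀ i * g x₀ = w i := by
          rw [hg_def]
          simp only
          rw [Finset.mul_sum]
          have : ∀ j ∈ Finset.univ, F x₀ i * (F x₀ j * w j) = w i * w j * w j := by
            intro j _
            linear_combination (w j) * hprod x₀ hx₀ i j
          rw [Finset.sum_congr rfl this]
          have : ∑ j, w i * w j * w j = w i * ∑ j, w j ^ 2 := by
            rw [Finset.mul_sum]
            exact Finset.sum_congr rfl fun j _ => by ring
          rw [this, hw, mul_one]
        rw [h1, mul_one] at this
        exact this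
      have : (g x₀ - 1) * (g x₀ + 1) = 0 := by nlinarith
      rcases mul_eq_zero.mp this with h | h
      · exact absurd (by linarith) hne
      · linarith
    -- continuity and connectedness
    have hgcont : ContinuousOn g (sphereSet n) := by
      have : g = fun z => ∑ i, eval z (p i) * w i := by
        funext z
        exact Finset.sum_congr rfl fun i _ => by rw [hp i z]
      rw [this]
      exact (continuous_finset_sum _ fun i _ =>
        (MvPolynomial.continuous_eval _).mul continuous_const).continuousOn
    have hconn : IsConnected (g '' sphereSet n) :=
      (sphereSet_isConnected n hn).image g hgcont
    have hsub : Set.Icc (-1 : ℝ) 1 ⊆ g '' sphereSet n := by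
      apply hconn.isPreconnected.Icc_subset
      · exact ⟨x₀, hx₀, hgx⟩
      · exact ⟨y₀, hy₀, hgy⟩
    obtain ⟨z, hz, hgz⟩ := hsub (Set.mem_Icc.mpr ⟨by norm_num, by norm_num⟩ :
      (0:ℝ) ∈ Set.Icc (-1) 1)
    have := gsq z hz
    rw [hgz] at this
    norm_num at this

/-- For every `n ≥ 2`, `q_SO(n) = 1 + q(n)`. -/
theorem qSO_eq (n : ℕ) (hn : 2 ≤ n) : qSO n = 1 + q n := by
  have hn1 : 1 ≤ n := by omega
  have hq_ne := q_set_nonempty n hn1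
  obtain ⟨hq1, hqE⟩ : q n ∈ {r | 1 ≤ r ∧ ExistsNonconstPolyMap n r} := Nat.sInf_mem hq_ne
  have hso : ExistsNonconstPolyMapSO n (q n + 1) := sphere_to_so n (q n) hn1 hqE
  have hmem : (1 + q n) ∈ {r | 1 ≤ r ∧ ExistsNonconstPolyMapSO n r} := by
    refine ⟨by omega, ?_⟩
    rw [Nat.add_comm 1 (q n)]
    exact hso
  have hlb : ∀ m ∈ {r | 1 ≤ r ∧ ExistsNonconstPolyMapSO n r}, 1 + q n ≤ m := by
    rintro m ⟨hm1, hmE⟩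
    match m with
    | 0 => omega
    | 1 => exact absurd hmE (not_so_one n)
    | (s+2) =>
      have h1 := so_to_sphere n s hmE
      have h2 : q n ≤ s + 1 := Nat.sInf_le ⟨by omega, h1⟩
      omega
  exact le_antisymm (Nat.sInf_le hmem) (le_csInf ⟨_, hmem⟩ hlb)
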